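/- Every continuous character of the p-adic numbers ℚ_p is of the form x ↦ e^{2πi λ(ξx)} for a unique ξ ∈ ℚ_p, where λ: ℚ_p → ℚ/ℤ is the canonical map with kernel ℤ_p; in particular ℚ_p is self-dual as a locally compact abelian group. -/

import Mathlib

open Real


lemma norm_coe_small {s : ℝ} (hs : s ∈ Set.Ico (-(1/2) : ℝ) (1/2)) :
    ‖((s : ℝ) : AddCircle (1:ℝ))‖ = |s| := by
  rw [AddCircle.norm_eq]
  have h0 : round s = 0 := by
    rw [round_eq_zero_iff]
    simpa using hs
  simp [h0]

lemma small_torsion_zero (y : AddCircle (1:ℝ)) (hy : ∀ m : ℕ, ‖m • y‖ < 1/4) : y = 0 := by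
  obtain ⟨⟨t, ht⟩, rfl⟩ : ∃ t : Set.Ico (-(1/2):ℝ) (-(1/2)+1), ((t : ℝ) : AddCircle (1:ℝ)) = y :=
    ⟨AddCircle.equivIco 1 (-(1/2)) y, (AddCircle.equivIco 1 (-(1/2))).symm_apply_apply y⟩
  have ht' : t ∈ Set.Ico (-(1/2):ℝ) (1/2) := by
    constructor
    · exact ht.1
    · linarith [ht.2]
  by_contra h
  have htne : t ≠ 0 := fun h0 => h (by simp [h0])
  have h1 : |t| < 1/4 := by
    have := hy 1
    rwa [one_smul, norm_coe_small ht'] at this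
  have hpos : 0 < |t| := abs_pos.mpr htne
  -- minimal m with m * |t| > 1/4
  obtain ⟨m, hm⟩ := Archimedean.arch (1/4 : ℝ) hpos
  -- let M be least with M * |t| > 1/4
  have hex : ∃ M : ℕ, 1/4 < M * |t| := by
    refine ⟨m + 1, lt_of_le_of_lt hm ?_⟩
    push_cast
    rw [nsmul_eq_mul] at *
    nlinarith
  classical
  set M := Nat.find hex with hM
  have hMs : 1/4 < M * |t| := Nat.find_spec hex
  have hMpos : M ≠ 0 := by
    intro h0
    rw [h0] at hMs; norm_num at hMs
  have hMlt : ((M:ℝ) - 1) * |t| ≤ 1/4 := by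
    have := Nat.find_min hex (m := M - 1) (by omega)
    push_neg at this
    have : ((M - 1 : ℕ) : ℝ) * |t| ≤ 1/4 := this
    rwa [Nat.cast_sub (by omega), Nat.cast_one] at this
  have habs : |(M : ℝ) * t| < 1/2 := by
    rw [abs_mul, abs_of_nonneg (by positivity : (0:ℝ) ≤ (M:ℝ))]
    nlinarith
  have := hy M
  rw [← AddCircle.coe_nsmul] at this
  have hval : ‖(((M : ℕ) • t : ℝ) : AddCircle (1:ℝ))‖ = |(M:ℝ) * t| := by
    rw [nsmul_eq_mul]
    apply norm_coe_small
    have := abs_lt.mp habs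
    constructor <;> [linarith; linarith]
  rw [hval, abs_mul, abs_of_nonneg (by positivity : (0:ℝ) ≤ (M:ℝ))] at this
  linarith

section Core
variable {p : ℕ} [hp : Fact p.Prime]

private lemma torsion_rep (n : ℕ) (hn : 0 < n) (y : AddCircle (1:ℝ)) (hy : n • y = 0) :
    ∃ m : ℤ, y = ((m / n : ℝ) : AddCircle (1:ℝ)) := by
  obtain ⟨t, ht, rfl⟩ := AddCircle.eq_coe_Ico y
  rw [← AddCircle.coe_nsmul, AddCircle.coe_eq_zero_iff] at hy
  obtain ⟨m, hm⟩ := hy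
  refine ⟨m, ?_⟩
  congr 1
  have hn' : (n:ℝ) ≠ 0 := by positivity
  have hm' : (m:ℝ) = n * t := by simpa [zsmul_eq_mul, nsmul_eq_mul] using hm
  rw [eq_div_iff hn']; linarith [hm']

private lemma core (lam : ℚ_[p] →+ AddCircle (1 : ℝ))
    (hlam_ker : ∀ x : ℚ_[p], lam x = 0 ↔ ‖x‖ ≤ 1)
    (F : ℚ_[p] →+ AddCircle (1 : ℝ))
    (hF : ∀ x : ℚ_[p], ‖x‖ ≤ 1 → F x = 0) :
    ∃ ξ : ℚ_[p], ∀ x, F x = lam (ξ * x) := by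
  have hp1 : (1:ℝ) < p := by exact_mod_cast hp.out.one_lt
  have hpR : (0:ℝ) < p := by linarith
  have hp0 : (p:ℚ_[p]) ≠ 0 := by exact_mod_cast hp.out.ne_zero
  set c : ℕ → ℚ_[p] := fun n => (p:ℚ_[p]) ^ (-(n:ℤ)) with hc
  have hc_norm : ∀ n, ‖c n‖ = (p:ℝ) ^ (n:ℤ) := by
    intro n; simp [hc]
  have hc_mul : ∀ n : ℕ, ((p ^ n : ℕ) : ℚ_[p]) * c n = 1 := by
    intro n
    push_cast
    rw [hc, ← zpow_natCast (p:ℚ_[p]) n, ← zpow_add₀ hp0]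
    simp
  -- smul lemmas
  have hlamz : ∀ (k : ℤ) (x : ℚ_[p]), lam ((k:ℚ_[p]) * x) = k • lam x := by
    intro k x; rw [← zsmul_eq_mul, map_zsmul]
  have hlamn : ∀ (k : ℕ) (x : ℚ_[p]), lam ((k:ℚ_[p]) * x) = k • lam x := by
    intro k x; rw [← nsmul_eq_mul, map_nsmul]
  have hFn : ∀ (k : ℕ) (x : ℚ_[p]), F ((k:ℚ_[p]) * x) = k • F x := by
    intro k x; rw [← nsmul_eq_mul, map_nsmul]
  have hFz : ∀ (k : ℤ) (x : ℚ_[p]), F ((k:ℚ_[p]) * x) = k • F x := by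
    intro k x; rw [← zsmul_eq_mul, map_zsmul]
  have hcoe_zsmul : ∀ (k : ℤ) (r : ℝ),
      (k • ((r : ℝ) : AddCircle (1:ℝ))) = (((k:ℝ) * r : ℝ) : AddCircle (1:ℝ)) := by
    intro k r
    rw [← AddCircle.coe_zsmul, zsmul_eq_mul]
  have hcoe_nsmul : ∀ (k : ℕ) (r : ℝ),
      (k • ((r : ℝ) : AddCircle (1:ℝ))) = (((k:ℝ) * r : ℝ) : AddCircle (1:ℝ)) := by
    intro k r
    rw [← AddCircle.coe_nsmul, nsmul_eq_mul]
  -- torsion of F (c n)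
  have htor : ∀ n : ℕ, (p ^ n : ℕ) • F (c n) = 0 := by
    intro n
    rw [← hFn, hc_mul]
    exact hF 1 (by simp)
  have htorlam : ∀ n : ℕ, (p ^ n : ℕ) • lam (c n) = 0 := by
    intro n
    rw [← hlamn, hc_mul]
    exact (hlam_ker 1).mpr (by simp)
  -- surjectivity of k ↦ lam (k * c n) onto p^n-torsion
  have hppow_pos : ∀ n : ℕ, 0 < p ^ n := fun n => pow_pos hp.out.pos n
  have lam_surj : ∀ (n : ℕ) (y : AddCircle (1:ℝ)), (p ^ n : ℕ) • y = 0 →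
      ∃ k : ℤ, lam ((k:ℚ_[p]) * c n) = y := by
    intro n y hy
    rcases Nat.eq_zero_or_pos n with rfl | hn
    · refine ⟨0, ?_⟩
      have : y = 0 := by simpa using hy
      simp [this]
    obtain ⟨m, rfl⟩ := torsion_rep _ (hppow_pos n) y hy
    obtain ⟨a, ha⟩ := torsion_rep _ (hppow_pos n) _ (htorlam n)
    -- p does not divide a
    have hnd : ¬ (p : ℤ) ∣ a := by
      rintro ⟨b, rfl⟩
      have hc1 : lam (c 1) = 0 := by
        have hcc : ((p ^ (n-1) : ℕ) : ℚ_[p]) * c n = c 1 := by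
          push_cast
          rw [hc, ← zpow_natCast (p:ℚ_[p]) (n-1), ← zpow_add₀ hp0]
          congr 1
          have : ((n - 1 : ℕ) : ℤ) = (n : ℤ) - 1 := by
            omega
          rw [this]; ring
        calc lam (c 1) = lam (((p ^ (n-1) : ℕ) : ℚ_[p]) * c n) := by rw [hcc]
          _ = (p ^ (n-1) : ℕ) • lam (c n) := hlamn _ _
          _ = (p ^ (n-1) : ℕ) • (((((p:ℤ) * b : ℤ) : ℝ) / ((p^n : ℕ) : ℝ) : ℝ) : AddCircle (1:ℝ)) := by rw [ha]
          _ = ((((p ^ (n-1) : ℕ) : ℝ) * (((p:ℤ) * b : ℤ) : ℝ) / ((p^n : ℕ) : ℝ) : ℝ) : AddCircle (1:ℝ)) := by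
                rw [hcoe_nsmul]; ring_nf
          _ = (((b : ℤ) : ℝ) : AddCircle (1:ℝ)) := by
                congr 1
                have hpn : ((p^n : ℕ) : ℝ) ≠ 0 := by exact_mod_cast (hppow_pos n).ne'
                field_simp
                push_cast
                rw [show ((p:ℝ)^n) = (p:ℝ)^(n-1) * p by
                  rw [← pow_succ]; congr 1; omega]
                ring
          _ = 0 := by
                rw [AddCircle.coe_eq_zero_iff]
                exact ⟨b, by simp⟩
      rw [hlam_ker] at hc1
      rw [hc_norm 1] at hc1
      norm_num at hc1
      exact absurd hc1 (not_le.mpr hp.out.one_lt)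
    -- Bezout
    have hcop : IsCoprime (a : ℤ) ((p:ℤ)^n) :=
      (((Nat.prime_iff_prime_int.mp hp.out).coprime_iff_not_dvd.mpr hnd).symm).pow_right
    obtain ⟨u, v, huv⟩ := hcop
    refine ⟨m * u, ?_⟩
    rw [hlamz, ha, hcoe_zsmul]
    rw [← sub_eq_zero, ← AddCircle.coe_sub, AddCircle.coe_eq_zero_iff]
    refine ⟨-(m * v), ?_⟩
    have hpn : ((p^n : ℕ) : ℝ) ≠ 0 := by exact_mod_cast (hppow_pos n).ne'
    have hua : (u : ℝ) * a = 1 - v * ((p:ℝ))^n := by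
      have := congrArg (fun z : ℤ => (z : ℝ)) huv
      push_cast at this
      linarith
    field_simp
    push_cast at hua ⊢
    linear_combination (-(m:ℝ)) * hua
  -- choose k
  have hex : ∀ n : ℕ, ∃ k : ℤ, lam ((k:ℚ_[p]) * c n) = F (c n) := fun n => lam_surj n _ (htor n)
  choose k hk using hex
  have hcc : ∀ m n : ℕ, n ≤ m → ((p ^ (m-n) : ℕ) : ℚ_[p]) * c m = c n := by
    intro m n h
    push_cast
    rw [hc, ← zpow_natCast (p:ℚ_[p]) (m-n), ← zpow_add₀ hp0]
    congr 1
    omega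
  have hlamkm : ∀ m n : ℕ, n ≤ m → lam ((k m : ℚ_[p]) * c n) = F (c n) := by
    intro m n h
    rw [← hcc m n h]
    have hre : (k m : ℚ_[p]) * (((p ^ (m-n):ℕ):ℚ_[p]) * c m) = ((p ^ (m-n):ℕ):ℚ_[p]) * ((k m:ℚ_[p]) * c m) := by ring
    rw [hre, hlamn, hk m, ← hFn]
  have hdiff : ∀ m n : ℕ, n ≤ m → ‖((k m - k n : ℤ) : ℚ_[p])‖ ≤ (p:ℝ)^(-(n:ℤ)) := by
    intro m n h
    have h0 : lam (((k m - k n : ℤ):ℚ_[p]) * c n) = 0 := by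
      have hre : ((k m - k n : ℤ):ℚ_[p]) * c n = (k m:ℚ_[p]) * c n - (k n:ℚ_[p]) * c n := by
        push_cast; ring
      rw [hre, map_sub, hlamkm m n h, hk n, sub_self]
    rw [hlam_ker, norm_mul, hc_norm] at h0
    have hpn : (0:ℝ) < (p:ℝ)^(n:ℤ) := zpow_pos hpR _
    rw [zpow_neg, ← one_div]
    rw [← le_div_iff₀ hpn] at h0
    simpa using h0
  have hcauchy : CauchySeq (fun n : ℕ => ((k n : ℚ_[p]))) := by
    apply cauchySeq_of_le_geometric (r := (p:ℝ)⁻¹) (C := 1)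
    · exact inv_lt_one_of_one_lt₀ hp1
    · intro n
      rw [dist_eq_norm]
      have hre : ((k n:ℚ_[p])) - k (n+1) = -(((k (n+1) - k n : ℤ) : ℚ_[p])) := by push_cast; ring
      rw [hre, norm_neg]
      refine le_trans (hdiff (n+1) n (by omega)) (le_of_eq ?_)
      rw [one_mul, zpow_neg, zpow_natCast, inv_pow]
  obtain ⟨ξ, hξ⟩ := cauchySeq_tendsto_of_complete hcauchy
  have hclose : ∀ n : ℕ, ‖ξ - k n‖ ≤ (p:ℝ)^(-(n:ℤ)) := by
    intro n
    have h1 : Filter.Tendsto (fun m : ℕ => dist ((k m : ℚ_[p])) ((k n:ℚ_[p]))) Filter.atTop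
        (nhds (dist ξ ((k n:ℚ_[p])))) := hξ.dist tendsto_const_nhds
    have h2 : ∀ᶠ m in Filter.atTop, dist ((k m : ℚ_[p])) ((k n:ℚ_[p])) ≤ (p:ℝ)^(-(n:ℤ)) := by
      filter_upwards [Filter.eventually_ge_atTop n] with m hm
      rw [dist_eq_norm]
      have hre : ((k m:ℚ_[p])) - k n = ((k m - k n : ℤ) : ℚ_[p]) := by push_cast; ring
      rw [hre]; exact hdiff m n hm
    have := le_of_tendsto h1 h2
    rwa [dist_eq_norm] at this
  have hxi1 : ‖ξ‖ ≤ 1 := by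
    have h0 := hclose 0
    have hre : ξ = (ξ - k 0) + (k 0 : ℚ_[p]) := by ring
    rw [hre]
    refine le_trans (Padic.nonarchimedean _ _) (max_le ?_ (Padic.norm_int_le_one _))
    simpa using h0
  have hkey : ∀ n : ℕ, lam (ξ * c n) = F (c n) := by
    intro n
    have hsplit : ξ * c n = (k n : ℚ_[p]) * c n + (ξ - k n) * c n := by ring
    rw [hsplit, map_add, hk n]
    have hz : lam ((ξ - (k n:ℚ_[p])) * c n) = 0 := by
      rw [hlam_ker, norm_mul, hc_norm]
      calc ‖ξ - (k n:ℚ_[p])‖ * (p:ℝ)^(n:ℤ)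
          ≤ (p:ℝ)^(-(n:ℤ)) * (p:ℝ)^(n:ℤ) :=
            mul_le_mul_of_nonneg_right (hclose n) (le_of_lt (zpow_pos hpR _))
        _ = 1 := by rw [← zpow_add₀ (ne_of_gt hpR)]; simp
    rw [hz, add_zero]
  -- decomposition and conclusion
  refine ⟨ξ, fun x => ?_⟩
  obtain ⟨n, hxn⟩ := pow_unbounded_of_one_lt ‖x‖ hp1
  set y : ℚ_[p] := ((p:ℚ_[p])^(n:ℕ)) * x with hy
  have hy1 : ‖y‖ ≤ 1 := by
    rw [hy, norm_mul, Padic.norm_p_pow]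
    calc (p:ℝ)^(-(n:ℤ)) * ‖x‖ ≤ (p:ℝ)^(-(n:ℤ)) * (p:ℝ)^(n:ℕ) :=
          mul_le_mul_of_nonneg_left (le_of_lt hxn) (le_of_lt (zpow_pos hpR _))
      _ = 1 := by rw [← zpow_natCast (p:ℝ) n, ← zpow_add₀ (ne_of_gt hpR)]; simp
  set yz : ℤ_[p] := ⟨y, hy1⟩ with hyz
  set j : ℤ := (PadicInt.appr yz n : ℤ) with hj
  have happr : ‖y - (j:ℚ_[p])‖ ≤ (p:ℝ)^(-(n:ℤ)) := by
    have hsp := PadicInt.appr_spec n yz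
    rw [← PadicInt.norm_le_pow_iff_mem_span_pow] at hsp
    have hco : ((yz - ((PadicInt.appr yz n : ℕ) : ℤ_[p]) : ℤ_[p]) : ℚ_[p]) = y - (j:ℚ_[p]) := by
      push_cast [hj]
      rfl
    rw [← hco]
    rw [PadicInt.padic_norm_e_of_padicInt]
    exact hsp
  have hcn_inv : c n * ((p:ℚ_[p])^(n:ℕ)) = 1 := by
    rw [hc, ← zpow_natCast (p:ℚ_[p]) n, ← zpow_add₀ hp0]
    simp
  have hxdec : x = (j:ℚ_[p]) * c n + c n * (y - j) := by
    have : c n * y = x := by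
      rw [hy, ← mul_assoc, hcn_inv, one_mul]
    rw [← this]; ring
  have hrnorm : ‖c n * (y - (j:ℚ_[p]))‖ ≤ 1 := by
    rw [norm_mul, hc_norm]
    calc (p:ℝ)^(n:ℤ) * ‖y - (j:ℚ_[p])‖ ≤ (p:ℝ)^(n:ℤ) * (p:ℝ)^(-(n:ℤ)) :=
          mul_le_mul_of_nonneg_left happr (le_of_lt (zpow_pos hpR _))
      _ = 1 := by rw [← zpow_add₀ (ne_of_gt hpR)]; simp
  have h1 : F x = j • F (c n) := by
    rw [hxdec, map_add, hF _ hrnorm, add_zero, hFz]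
  have h2 : lam (ξ * x) = j • lam (ξ * c n) := by
    have hre : ξ * x = (j:ℚ_[p]) * (ξ * c n) + ξ * (c n * (y - j)) := by
      rw [hxdec]; ring
    rw [hre, map_add, hlamz]
    have hz2 : lam (ξ * (c n * (y - (j:ℚ_[p])))) = 0 := by
      rw [hlam_ker, norm_mul]
      calc ‖ξ‖ * ‖c n * (y - (j:ℚ_[p]))‖ ≤ 1 * 1 :=
            mul_le_mul hxi1 hrnorm (norm_nonneg _) zero_le_one
        _ = 1 := one_mul 1
    rw [hz2, add_zero]
  rw [h1, h2, hkey]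
end Core

/-- Self-duality of `ℚ_p`: if `λ : ℚ_p → ℝ/ℤ` is the canonical additive map with kernel `ℤ_p`,
then every continuous character of `ℚ_p` has the form `x ↦ e^{2πi λ(ξx)}` for a unique
`ξ ∈ ℚ_p`. -/
theorem padic_characters (p : ℕ) [Fact p.Prime]
    (lam : ℚ_[p] →+ AddCircle (1 : ℝ)) (hlam_cont : Continuous lam)
    (hlam_ker : ∀ x : ℚ_[p], lam x = 0 ↔ ‖x‖ ≤ 1)
    (χ : ℚ_[p] → Circle) (hcont : Continuous χ)
    (hhom : ∀ x y : ℚ_[p], χ (x + y) = χ x * χ y) :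
    ∃! ξ : ℚ_[p], ∀ x : ℚ_[p], χ x = AddCircle.toCircle (lam (ξ * x)) := by
  have hpprime : p.Prime := Fact.out
  have hp1 : (1:ℝ) < p := by exact_mod_cast hpprime.one_lt
  have hpR : (0:ℝ) < p := by linarith
  have hinj := AddCircle.injective_toCircle (one_ne_zero : (1:ℝ) ≠ 0)
  set e := AddCircle.homeomorphCircle (one_ne_zero : (1:ℝ) ≠ 0) with he
  set f : ℚ_[p] → AddCircle (1:ℝ) := fun x => e.symm (χ x) with hf
  have hfc : ∀ x, AddCircle.toCircle (f x) = χ x := by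
    intro x
    rw [← AddCircle.homeomorphCircle_apply one_ne_zero]
    exact e.apply_symm_apply (χ x)
  have hχ0 : χ 0 = 1 := by
    have h := hhom 0 0
    rw [add_zero] at h
    have := mul_left_cancel (a := χ 0) (b := (1 : Circle)) (c := χ 0) (by rw [mul_one, ← h])
    exact this.symm
  have hfadd : ∀ x y, f (x + y) = f x + f y := by
    intro x y
    apply hinj
    rw [AddCircle.toCircle_add, hfc, hfc, hfc, hhom]
  have hf0 : f 0 = 0 := by
    apply hinj
    rw [hfc, hχ0, AddCircle.toCircle_zero]
  have hfcont : Continuous f := e.symm.continuous.comp hcont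
  -- find N such that f vanishes on the ball of radius p^(-N)
  have hf_tendsto : Filter.Tendsto f (nhds 0) (nhds 0) := by
    have := hfcont.tendsto 0
    rwa [hf0] at this
  rw [Metric.tendsto_nhds_nhds] at hf_tendsto
  obtain ⟨δ, hδ, hδ2⟩ := hf_tendsto (1/4 : ℝ) (by norm_num)
  obtain ⟨N, hN⟩ : ∃ N : ℕ, ((p:ℝ))^(-(N:ℤ)) < δ := by
    obtain ⟨N, hN⟩ := exists_pow_lt_of_lt_one hδ (inv_lt_one_of_one_lt₀ hp1)
    exact ⟨N, by rw [zpow_neg, zpow_natCast, ← inv_pow]; exact hN⟩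
  have hvanish : ∀ x : ℚ_[p], ‖x‖ ≤ (p:ℝ)^(-(N:ℤ)) → f x = 0 := by
    intro x hx
    apply small_torsion_zero
    intro m
    have hmx : (m:ℕ) • f x = f ((m:ℚ_[p]) * x) := by
      rw [← nsmul_eq_mul]
      induction m with
      | zero => simpa using hf0.symm
      | succ i ih => rw [succ_nsmul, succ_nsmul, hfadd, ih]
    rw [hmx]
    have h1 : ‖((m:ℕ):ℚ_[p])‖ ≤ 1 := by
      have := Padic.norm_int_le_one (p := p) (m:ℤ)
      push_cast at this
      exact this
    have hnorm : dist ((m:ℚ_[p]) * x) 0 < δ := by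
      rw [dist_zero_right, norm_mul]
      have hx0 : (0:ℝ) ≤ ‖x‖ := norm_nonneg x
      nlinarith [lt_of_le_of_lt hx hN]
    have := hδ2 hnorm
    rwa [dist_zero_right] at this
  -- scaled character
  set cN : ℚ_[p] := (p:ℚ_[p]) ^ (N:ℕ) with hcN
  have hp0 : (p:ℚ_[p]) ≠ 0 := by exact_mod_cast hpprime.ne_zero
  set F : ℚ_[p] →+ AddCircle (1:ℝ) :=
    AddMonoidHom.mk' (fun x => f (cN * x))
      (by intro a b
          show f (cN * (a + b)) = f (cN * a) + f (cN * b)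
          rw [mul_add, hfadd]) with hFdef
  have hFval : ∀ x, F x = f (cN * x) := fun x => rfl
  have hFvan : ∀ x : ℚ_[p], ‖x‖ ≤ 1 → F x = 0 := by
    intro x hx
    rw [hFval]
    apply hvanish
    rw [norm_mul, hcN, Padic.norm_p_pow]
    calc (p:ℝ)^(-(N:ℤ)) * ‖x‖ ≤ (p:ℝ)^(-(N:ℤ)) * 1 :=
          mul_le_mul_of_nonneg_left hx (le_of_lt (zpow_pos hpR _))
      _ ≤ (p:ℝ)^(-(N:ℤ)) := le_of_eq (mul_one _)
  obtain ⟨ξ', hξ'⟩ := core lam hlam_ker F hFvan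
  set dN : ℚ_[p] := (p:ℚ_[p]) ^ (-(N:ℤ)) with hdN
  have hcd : cN * dN = 1 := by
    rw [hcN, hdN, ← zpow_natCast (p:ℚ_[p]) N, ← zpow_add₀ hp0]
    simp
  have hfx : ∀ y, f y = lam ((ξ' * dN) * y) := by
    intro y
    have h1 : f y = F (dN * y) := by
      rw [hFval, ← mul_assoc, hcd, one_mul]
    rw [h1, hξ', mul_assoc]
  refine ⟨ξ' * dN, fun x => ?_, fun η hη => ?_⟩
  · rw [← hfx x, hfc]
  · have hagree : ∀ x, lam (η * x) = lam ((ξ' * dN) * x) := by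
      intro x
      apply hinj
      rw [← hη x, ← hfx x, hfc]
    have hz : ∀ x, lam ((η - ξ' * dN) * x) = 0 := by
      intro x
      rw [sub_mul, map_sub, hagree, sub_self]
    by_contra hne
    have hd : η - ξ' * dN ≠ 0 := sub_ne_zero.mpr hne
    have hcontra := (hlam_ker _).mp (hz ((η - ξ' * dN)⁻¹ * (p:ℚ_[p])⁻¹))
    rw [← mul_assoc, mul_inv_cancel₀ hd, one_mul, norm_inv, Padic.norm_p, inv_inv] at hcontra
    linarith
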